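/- arXiv:2304.12807 — 5 statements merged into one kernel-verified Lean document; each statement's English description precedes it below -/
import Mathlib

section
/- For every prime p, the directed cycle C_p = (Z/p; {(i,i+1) : i ∈ Z/p}) has no polymorphism c of arity p satisfying the cyclic identity c(x_1,...,x_p) = c(x_2,...,x_p,x_1). That is, there is no function c : (Z/p)^p → Z/p which preserves the successor relation and is invariant under cyclic shifts of its arguments. -/
/-- For every prime `p`, the directed cycle `C_p = (ℤ/p; {(i,i+1)})` has no
polymorphism of arity `p` satisfying the cyclic identity. -/
theorem no_cyclic_polymorphism_of_cycle (p : ℕ) (hp : p.Prime) :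
    ¬ ∃ c : (ZMod p → ZMod p) → ZMod p,
      (∀ a b : ZMod p → ZMod p, (∀ j, b j = a j + 1) → c b = c a + 1) ∧
      (∀ x : ZMod p → ZMod p, c (fun i => x (i + 1)) = c x) := by
  rintro ⟨c, h1, h2⟩
  have key : c (fun i => (id i : ZMod p) + 1) = c id + 1 :=
    h1 id (fun i => id i + 1) (fun j => rfl)
  have key2 : c (fun i => (id (i + 1) : ZMod p)) = c id := h2 id
  simp only [id] at key key2
  rw [key] at key2
  have h10 : (1 : ZMod p) = 0 := by linear_combination key2
  haveI : Fact p.Prime := ⟨hp⟩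
  exact one_ne_zero h10
end

section
/- Let A be a finite set, M' : A^3 → A a majority operation, c_2 : A^2 → A a binary operation satisfying c_2(x,y) = c_2(y,x), and c_3 : A^3 → A satisfying c_3(x,y,z) = c_3(y,z,x), all idempotent. Then M(x,y,z) := c_2(c_3(M'(x,y,z), M'(y,z,x), M'(z,x,y)), c_3(M'(x,z,y), M'(z,y,x), M'(y,x,z))) is a majority operation that is fully symmetric: M(x,y,z) is invariant under all permutations of its arguments. -/
/-- From an idempotent majority operation `M'`, a binary commutative idempotent `c₂`
and a ternary cyclic idempotent `c₃`, the operation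
`M(x,y,z) := c₂(c₃(M'(x,y,z),M'(y,z,x),M'(z,x,y)), c₃(M'(x,z,y),M'(z,y,x),M'(y,x,z)))`
is a fully symmetric majority operation. -/
theorem symmetric_majority (A : Type*) [Finite A]
    (M' : A → A → A → A) (c₂ : A → A → A) (c₃ : A → A → A → A)
    (hM' : ∀ x y : A, M' x x y = x ∧ M' x y x = x ∧ M' y x x = x)
    (hc₂ : ∀ x y : A, c₂ x y = c₂ y x) (hc₂id : ∀ x : A, c₂ x x = x)
    (hc₃ : ∀ x y z : A, c₃ x y z = c₃ y z x) (hc₃id : ∀ x : A, c₃ x x x = x)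
    (M : A → A → A → A)
    (hMdef : ∀ x y z : A, M x y z =
      c₂ (c₃ (M' x y z) (M' y z x) (M' z x y)) (c₃ (M' x z y) (M' z y x) (M' y x z))) :
    (∀ x y : A, M x x y = x ∧ M x y x = x ∧ M y x x = x) ∧
    (∀ x y z : A, M x y z = M x z y ∧ M x y z = M y x z ∧ M x y z = M y z x ∧
      M x y z = M z x y ∧ M x y z = M z y x) := by
  constructor
  · intro x y
    obtain ⟨h1, h2, h3⟩ := hM' x y
    obtain ⟨g1, g2, g3⟩ := hM' y x
    refine ⟨?_, ?_, ?_⟩ <;> rw [hMdef] <;>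
      simp [h1, h2, h3, g1, g2, g3, hc₃id, hc₂id]
  · intro x y z
    have cyc2 : ∀ a b c : A, c₃ a b c = c₃ c a b := fun a b c => by rw [hc₃, hc₃]
    refine ⟨?_, ?_, ?_, ?_, ?_⟩ <;> rw [hMdef, hMdef]
    · rw [hc₂]
    · rw [hc₃ (M' y x z), hc₃ (M' y z x), hc₂, cyc2 (M' x y z)]
    · rw [hc₃ (M' x y z), hc₃ (M' x z y), hc₃ (M' z y x)]
    · rw [hc₃ (M' z x y), hc₃ (M' x y z), hc₃ (M' z y x), hc₃ (M' x z y), hc₃ (M' z y x)]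
    · rw [hc₃ (M' z y x), hc₃ (M' z x y), hc₂, cyc2 (M' x z y)]
end

section
/- Let A be a finite set, m a symmetric minority-type idempotent ternary operation, M a symmetric majority operation on A, and define for n ≥ 3 the operation s_n(x_1,...,x_n) := m(s_{n-1}(x_1, M(x_1,x_2,x_3), x_4,...,x_n), s_{n-1}(x_2, M(x_1,x_2,x_3), x_4,...,x_n), s_{n-1}(x_3, M(x_1,x_2,x_3), x_4,...,x_n)). Then s_n(x,x,x_3,x_4,...,x_n) = s_{n-1}(x_3,x,x_4,...,x_n) for all inputs, and s_n is invariant under all permutations of its first three arguments. -/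
/-- If `sₙ(x₁,x₂,x₃,r) := m(s'(x₁,M(x₁,x₂,x₃),r), s'(x₂,M(x₁,x₂,x₃),r), s'(x₃,M(x₁,x₂,x₃),r))`
where `m` is a symmetric minority-type idempotent operation and `M` a symmetric majority,
then `sₙ(x,x,x₃,r) = s'(x₃,x,r)` and `sₙ` is invariant under permutations of its first
three arguments, for any choice of the previous operation `s'`. -/
theorem sn_symmetries (A : Type*) [Finite A]
    (m M : A → A → A → A)
    (hmsym : ∀ x y z : A, m x y z = m y x z ∧ m x y z = m x z y)
    (hm : ∀ x y : A, m x x y = y)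
    (hMsym : ∀ x y z : A, M x y z = M y x z ∧ M x y z = M x z y)
    (hM : ∀ x y : A, M x x y = x)
    (k : ℕ) (s' : A → A → (Fin k → A) → A)
    (sn : A → A → A → (Fin k → A) → A)
    (hsn : ∀ x₁ x₂ x₃ r, sn x₁ x₂ x₃ r =
      m (s' x₁ (M x₁ x₂ x₃) r) (s' x₂ (M x₁ x₂ x₃) r) (s' x₃ (M x₁ x₂ x₃) r)) :
    (∀ x x₃ r, sn x x x₃ r = s' x₃ x r) ∧
    (∀ x₁ x₂ x₃ r, sn x₁ x₂ x₃ r = sn x₂ x₁ x₃ r ∧ sn x₁ x₂ x₃ r = sn x₁ x₃ x₂ r) := by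
  constructor
  · intro x x₃ r
    rw [hsn, hM x x₃, hm]
  · intro x₁ x₂ x₃ r
    constructor
    · rw [hsn, hsn, (hMsym x₁ x₂ x₃).1, (hmsym _ _ _).1]
    · rw [hsn, hsn, (hMsym x₁ x₂ x₃).2, (hmsym _ _ _).2]
end

section
/- On E_3 = {0,1,2}, suppose s_n : E_3^n → E_3 (for each n ≥ 2) are totally symmetric idempotent operations: s_n depends only on the set of values of its arguments. Suppose m is a symmetric minority with constant c. If s_n are defined recursively via a symmetric majority M^c with constant c as s_n(x_1,...,x_n) := m(s_{n-1}(x_1, M^c(x_1,x_2,x_3), x_4,...,x_n), s_{n-1}(x_2, M^c(x_1,x_2,x_3), x_4,...,x_n), s_{n-1}(x_3, M^c(x_1,x_2,x_3), x_4,...,x_n)), then by induction: (i) if the set of arguments {x_1,...,x_n} equals a two-element set {a,b}, then s_n(x_1,...,x_n) = s_2(a,b); (ii) if {x_1,...,x_n} = {0,1,2}, then s_n(x_1,...,x_n) = m(s_2(0,c), s_2(1,c), s_2(2,c)). In particular each s_n is totally symmetric. -/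
/-- The tuple `(a, M(x₀,x₁,x₂), x₄, …, xₙ)` obtained from `x` in the recursive
definition of the totally symmetric operations `sₙ`. -/
def shiftTuple {k : ℕ} (M : ZMod 3 → ZMod 3 → ZMod 3 → ZMod 3)
    (x : Fin (k + 3) → ZMod 3) (a : ZMod 3) : Fin (k + 2) → ZMod 3 :=
  fun i =>
    if (i : ℕ) = 0 then a
    else if (i : ℕ) = 1 then M (x 0) (x 1) (x 2)
    else x ⟨(i : ℕ) + 1, by omega⟩

/-- For the family `sₙ` (where `s (k)` has arity `k+2`) defined recursively from a
commutative idempotent binary operation `s 0`, a symmetric minority `m` with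
constant `c` and a symmetric majority `Mc` with constant `c`:
(i) on tuples with value set `{a,b}` it returns `s 0 (a,b)`;
(ii) on tuples with value set `{0,1,2}` it returns `m (s₂(0,c), s₂(1,c), s₂(2,c))`;
in particular each `sₙ` is totally symmetric. -/
theorem sn_totally_symmetric (c : ZMod 3)
    (m Mc : ZMod 3 → ZMod 3 → ZMod 3 → ZMod 3)
    (hmsym : ∀ x y z, m x y z = m y x z ∧ m x y z = m x z y)
    (hmmin : ∀ x y, m x x y = y)
    (hmc : ∀ x y z, x ≠ y → y ≠ z → x ≠ z → m x y z = c)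
    (hMsym : ∀ x y z, Mc x y z = Mc y x z ∧ Mc x y z = Mc x z y)
    (hMmaj : ∀ x y, Mc x x y = x)
    (hMc : ∀ x y z, x ≠ y → y ≠ z → x ≠ z → Mc x y z = c)
    (s : (k : ℕ) → (Fin (k + 2) → ZMod 3) → ZMod 3)
    (hs2comm : ∀ a b, s 0 ![a, b] = s 0 ![b, a])
    (hs2id : ∀ a, s 0 ![a, a] = a)
    (hrec : ∀ (k : ℕ) (x : Fin (k + 3) → ZMod 3),
      s (k + 1) x = m (s k (shiftTuple Mc x (x 0)))
                      (s k (shiftTuple Mc x (x 1)))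
                      (s k (shiftTuple Mc x (x 2)))) :
    (∀ (k : ℕ) (x : Fin (k + 2) → ZMod 3) (a b : ZMod 3), a ≠ b →
      (∀ i, x i = a ∨ x i = b) → (∃ i, x i = a) → (∃ i, x i = b) →
      s k x = s 0 ![a, b]) ∧
    (∀ (k : ℕ) (x : Fin (k + 2) → ZMod 3),
      (∀ v : ZMod 3, ∃ i, x i = v) →
      s k x = m (s 0 ![0, c]) (s 0 ![1, c]) (s 0 ![2, c])) ∧
    (∀ (k : ℕ) (x y : Fin (k + 2) → ZMod 3),
      (∀ v : ZMod 3, (∃ i, x i = v) ↔ (∃ j, y j = v)) → s k x = s k y) := by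
  have zcover : ∀ v : ZMod 3, v = 0 ∨ v = 1 ∨ v = 2 := by decide
  have cover3 : ∀ a b g w : ZMod 3, a ≠ b → b ≠ g → a ≠ g → (w = a ∨ w = b ∨ w = g) := by decide
  have perm6' : ∀ a b g : ZMod 3, a = b ∨ b = g ∨ a = g ∨
      ((a=0∧b=1∧g=2)∨(a=0∧b=2∧g=1)∨(a=1∧b=0∧g=2)∨(a=1∧b=2∧g=0)∨(a=2∧b=0∧g=1)∨(a=2∧b=1∧g=0)) := by
    decide
  have perm6 : ∀ a b g : ZMod 3, a ≠ b → b ≠ g → a ≠ g →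
      (a=0∧b=1∧g=2)∨(a=0∧b=2∧g=1)∨(a=1∧b=0∧g=2)∨(a=1∧b=2∧g=0)∨(a=2∧b=0∧g=1)∨(a=2∧b=1∧g=0) := by
    intro a b g h1 h2 h3
    rcases perm6' a b g with h|h|h|h
    exacts [absurd h h1, absurd h h2, absurd h h3, h]
  have oddone' : ∀ p q r cc dd : ZMod 3, p = q ∨ q = r ∨ p = r ∨ dd = cc ∨
      ((p≠cc∧p≠dd∧(q=cc∨q=dd)∧(r=cc∨r=dd)) ∨ (q≠cc∧q≠dd∧(p=cc∨p=dd)∧(r=cc∨r=dd)) ∨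
       (r≠cc∧r≠dd∧(p=cc∨p=dd)∧(q=cc∨q=dd))) := by decide
  have oddone : ∀ p q r cc dd : ZMod 3, p≠q→q≠r→p≠r→dd≠cc→
      ((p≠cc∧p≠dd∧(q=cc∨q=dd)∧(r=cc∨r=dd)) ∨ (q≠cc∧q≠dd∧(p=cc∨p=dd)∧(r=cc∨r=dd)) ∨
       (r≠cc∧r≠dd∧(p=cc∨p=dd)∧(q=cc∨q=dd))) := by
    intro p q r cc dd h1 h2 h3 h4
    rcases oddone' p q r cc dd with h|h|h|h|h
    exacts [absurd h h1, absurd h h2, absurd h h3, absurd h h4, h]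
  have msw1 : ∀ a b g, m a b g = m b a g := fun a b g => (hmsym a b g).1
  have msw2 : ∀ a b g, m a b g = m a g b := fun a b g => (hmsym a b g).2
  have m2 : ∀ u w, m u w u = w := fun u w => by rw [msw2]; exact hmmin u w
  have m3 : ∀ u w, m w u u = w := fun u w => by rw [msw1]; exact m2 u w
  have mrot : ∀ p q r, m p q r = m q r p := fun p q r => (msw1 p q r).trans (msw2 q p r)
  have M2 : ∀ u w, Mc u w u = u := fun u w => by rw [(hMsym u w u).2]; exact hMmaj u w
  have M3 : ∀ u w, Mc w u u = u := fun u w => by rw [(hMsym w u u).1]; exact M2 u w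
  have hfin3 : ∀ (k : ℕ) (i : Fin (k+3)), (i:ℕ) < 3 → i = 0 ∨ i = 1 ∨ i = 2 := by
    intro k i h
    have : (i:ℕ) = 0 ∨ (i:ℕ) = 1 ∨ (i:ℕ) = 2 := by omega
    rcases this with h|h|h
    · exact Or.inl (Fin.ext (by rw [h]; simp))
    · exact Or.inr (Or.inl (Fin.ext (by rw [h]; simp)))
    · exact Or.inr (Or.inr (Fin.ext (by rw [h]; simp; exact (Nat.mod_eq_of_lt (by omega)).symm)))
  have ht0 : ∀ (k:ℕ) (x : Fin (k+3) → ZMod 3) a, shiftTuple Mc x a 0 = a := by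
    intro k x a; simp [shiftTuple]
  have ht1 : ∀ (k:ℕ) (x : Fin (k+3) → ZMod 3) a,
      shiftTuple Mc x a 1 = Mc (x 0) (x 1) (x 2) := by
    intro k x a; simp [shiftTuple]
  have htrest : ∀ (k:ℕ) (x : Fin (k+3) → ZMod 3) a (j : Fin (k+3)), 3 ≤ (j:ℕ) →
      shiftTuple Mc x a ⟨(j:ℕ) - 1, by omega⟩ = x j := by
    intro k x a j hj
    show (if ((j:ℕ)-1) = 0 then a else if ((j:ℕ)-1) = 1 then Mc (x 0) (x 1) (x 2)
         else x ⟨((j:ℕ)-1) + 1, by omega⟩) = x j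
    rw [if_neg (by omega), if_neg (by omega)]
    congr 1
    exact Fin.ext (by simp; omega)
  have hall' : ∀ (k:ℕ) (x : Fin (k+3) → ZMod 3) a (P : ZMod 3 → Prop),
      P a → P (Mc (x 0) (x 1) (x 2)) → (∀ j : Fin (k+3), 3 ≤ (j:ℕ) → P (x j)) →
      ∀ i, P (shiftTuple Mc x a i) := by
    intro k x a P h1 h2 h3 i
    by_cases e0 : (i:ℕ) = 0
    · simpa [shiftTuple, e0] using h1
    · by_cases e1 : (i:ℕ) = 1
      · simpa [shiftTuple, e0, e1] using h2
      · have he : shiftTuple Mc x a i = x ⟨(i:ℕ)+1, by omega⟩ := by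
          simp [shiftTuple, e0, e1]
        rw [he]; exact h3 _ (by show 3 ≤ (i:ℕ)+1; omega)
  have hconst : ∀ (k:ℕ) (x : Fin (k+2) → ZMod 3) a, (∀ i, x i = a) → s k x = a := by
    intro k
    induction k with
    | zero =>
      intro x a h
      have hx : x = ![a, a] := by funext i; fin_cases i <;> simp [h]
      rw [hx, hs2id]
    | succ n ih =>
      intro x a h
      rw [hrec]
      have hM : Mc (x 0) (x 1) (x 2) = a := by rw [h 0, h 1, h 2, hMmaj]
      have key : s n (shiftTuple Mc x a) = a :=
        ih _ a (hall' n x a (fun u => u = a) rfl hM (fun j _ => h j))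
      rw [h 0, h 1, h 2, key]
      exact hmmin a a
  have main : ∀ k : ℕ,
      (∀ (x : Fin (k + 2) → ZMod 3) (a b : ZMod 3), a ≠ b →
        (∀ i, x i = a ∨ x i = b) → (∃ i, x i = a) → (∃ i, x i = b) →
        s k x = s 0 ![a, b]) ∧
      (∀ (x : Fin (k + 2) → ZMod 3), (∀ v : ZMod 3, ∃ i, x i = v) →
        s k x = m (s 0 ![0, c]) (s 0 ![1, c]) (s 0 ![2, c])) := by
    intro k
    induction k with
    | zero =>
      constructor
      · rintro x a b hab hall ⟨i, hia⟩ ⟨j, hjb⟩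
        have hx : ∀ p q, x 0 = p → x 1 = q → x = ![p, q] := by
          intro p q h0 h1; funext i; fin_cases i <;> simpa
        fin_cases i <;> fin_cases j
        · exact absurd (hia.symm.trans hjb) hab
        · rw [hx a b hia hjb]
        · rw [hx b a hjb hia, hs2comm]
        · exact absurd (hia.symm.trans hjb) hab
      · intro x hall
        obtain ⟨i0, h0⟩ := hall 0
        obtain ⟨i1, h1⟩ := hall 1
        obtain ⟨i2, h2⟩ := hall 2
        fin_cases i0 <;> fin_cases i1 <;> fin_cases i2 <;>
          first
          | exact absurd (h0.symm.trans h1) (by decide)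
          | exact absurd (h0.symm.trans h2) (by decide)
          | exact absurd (h1.symm.trans h2) (by decide)
    | succ n ih =>
      obtain ⟨ihP, ihQ⟩ := ih
      constructor
      · -- two-valued case
        intro x a b hab hall ha hb
        rw [hrec n x]
        have hMab : ∀ w, Mc (x 0) (x 1) (x 2) = w → ∀ v,
            (v = a ∧ w = b) ∨ (v = b ∧ w = a) →
            s n (shiftTuple Mc x v) = s 0 ![a, b] := by
          intro w hMw v hv
          apply ihP _ a b hab
          · refine hall' n x v (fun u => u = a ∨ u = b) ?_ ?_ (fun j _ => hall j)
            · rcases hv with ⟨h,_⟩|⟨h,_⟩; exacts [Or.inl h, Or.inr h]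
            · rw [hMw]; rcases hv with ⟨_,h⟩|⟨_,h⟩; exacts [Or.inr h, Or.inl h]
          · rcases hv with ⟨h1,h2⟩|⟨h1,h2⟩
            · exact ⟨0, (ht0 n x v).trans h1⟩
            · exact ⟨1, ((ht1 n x v).trans hMw).trans h2⟩
          · rcases hv with ⟨h1,h2⟩|⟨h1,h2⟩
            · exact ⟨1, ((ht1 n x v).trans hMw).trans h2⟩
            · exact ⟨0, (ht0 n x v).trans h1⟩
        have hsame : ∀ p q, (p = a ∧ q = b) ∨ (p = b ∧ q = a) →
            x 0 = p → x 1 = p → x 2 = p →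
            s n (shiftTuple Mc x p) = s 0 ![a, b] := by
          intro p q hpq2 h0 h1 h2
          have hpq : p ≠ q := by
            rcases hpq2 with ⟨e1,e2⟩|⟨e1,e2⟩ <;> rw [e1, e2]
            · exact hab
            · exact hab.symm
          have hMw : Mc (x 0) (x 1) (x 2) = p := by rw [h0, h1, h2, hMmaj]
          have hq' : ∃ i, x i = q := by
            rcases hpq2 with ⟨_,h⟩|⟨_,h⟩ <;> rw [h]
            · exact hb
            · exact ha
          obtain ⟨i, hi⟩ := hq'
          have hi3 : 3 ≤ (i:ℕ) := by
            by_contra hlt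
            have hip : x i = p := by
              rcases hfin3 n i (by omega) with rfl|rfl|rfl <;> assumption
            exact hpq (hip.symm.trans hi)
          apply ihP _ a b hab
          · refine hall' n x p (fun u => u = a ∨ u = b) ?_ ?_ (fun j _ => hall j) <;>
              [skip; rw [hMw]] <;>
              · rcases hpq2 with ⟨h,_⟩|⟨h,_⟩; exacts [Or.inl h, Or.inr h]
          · rcases hpq2 with ⟨h1,h2⟩|⟨h1,h2⟩
            · exact ⟨0, (ht0 n x p).trans h1⟩
            · exact ⟨_, (htrest n x p i hi3).trans (hi.trans h2)⟩
          · rcases hpq2 with ⟨h1,h2⟩|⟨h1,h2⟩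
            · exact ⟨_, (htrest n x p i hi3).trans (hi.trans h2)⟩
            · exact ⟨0, (ht0 n x p).trans h1⟩
        rcases hall 0 with h0|h0 <;> rcases hall 1 with h1|h1 <;> rcases hall 2 with h2|h2 <;>
          rw [h0, h1, h2]
        · rw [hsame a b (Or.inl ⟨rfl, rfl⟩) h0 h1 h2]; exact hmmin _ _
        · rw [hMab a (by rw [h0,h1,h2]; exact hMmaj a b) b (Or.inr ⟨rfl, rfl⟩)]
          exact hmmin _ _
        · rw [hMab a (by rw [h0,h1,h2]; exact M2 a b) b (Or.inr ⟨rfl, rfl⟩)]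
          exact m2 _ _
        · rw [hMab b (by rw [h0,h1,h2]; exact M3 b a) a (Or.inl ⟨rfl, rfl⟩)]
          exact m3 _ _
        · rw [hMab a (by rw [h0,h1,h2]; exact M3 a b) b (Or.inr ⟨rfl, rfl⟩)]
          exact m3 _ _
        · rw [hMab b (by rw [h0,h1,h2]; exact M2 b a) a (Or.inl ⟨rfl, rfl⟩)]
          exact m2 _ _
        · rw [hMab b (by rw [h0,h1,h2]; exact hMmaj b a) a (Or.inl ⟨rfl, rfl⟩)]
          exact hmmin _ _
        · rw [hsame b a (Or.inr ⟨rfl, rfl⟩) h0 h1 h2]; exact hmmin _ _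
      · -- three-valued case
        intro x hall
        rw [hrec n x]
        by_cases h01 : x 0 = x 1
        · have hM : Mc (x 0) (x 1) (x 2) = x 1 := by rw [h01, hMmaj]
          have t2full : ∀ w, ∃ i, shiftTuple Mc x (x 2) i = w := by
            intro w
            obtain ⟨i, hi⟩ := hall w
            by_cases h3 : 3 ≤ (i:ℕ)
            · exact ⟨_, (htrest n x _ i h3).trans hi⟩
            · rcases hfin3 n i (by omega) with rfl|rfl|rfl
              · exact ⟨1, ((ht1 n x _).trans hM).trans (h01.symm.trans hi)⟩
              · exact ⟨1, ((ht1 n x _).trans hM).trans hi⟩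
              · exact ⟨0, (ht0 n x _).trans hi⟩
          rw [h01, ihQ _ t2full]
          exact hmmin _ _
        · by_cases h02 : x 0 = x 2
          · have hM : Mc (x 0) (x 1) (x 2) = x 0 := by rw [← h02]; exact M2 _ _
            have t1full : ∀ w, ∃ i, shiftTuple Mc x (x 1) i = w := by
              intro w
              obtain ⟨i, hi⟩ := hall w
              by_cases h3 : 3 ≤ (i:ℕ)
              · exact ⟨_, (htrest n x _ i h3).trans hi⟩
              · rcases hfin3 n i (by omega) with rfl|rfl|rfl
                · exact ⟨1, ((ht1 n x _).trans hM).trans hi⟩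
                · exact ⟨0, (ht0 n x _).trans hi⟩
                · exact ⟨1, ((ht1 n x _).trans hM).trans (h02.trans hi)⟩
            rw [← h02, ihQ _ t1full]
            exact m2 _ _
          · by_cases h12 : x 1 = x 2
            · have hM : Mc (x 0) (x 1) (x 2) = x 1 := by rw [← h12]; exact M3 _ _
              have t0full : ∀ w, ∃ i, shiftTuple Mc x (x 0) i = w := by
                intro w
                obtain ⟨i, hi⟩ := hall w
                by_cases h3 : 3 ≤ (i:ℕ)
                · exact ⟨_, (htrest n x _ i h3).trans hi⟩
                · rcases hfin3 n i (by omega) with rfl|rfl|rfl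
                  · exact ⟨0, (ht0 n x _).trans hi⟩
                  · exact ⟨1, ((ht1 n x _).trans hM).trans hi⟩
                  · exact ⟨1, ((ht1 n x _).trans hM).trans (h12.trans hi)⟩
              rw [← h12, ihQ _ t0full]
              exact m3 _ _
            · -- x 0, x 1, x 2 pairwise distinct
              have hM : Mc (x 0) (x 1) (x 2) = c := hMc _ _ _ h01 h12 h02
              by_cases hR : ∀ j : Fin (n+3), 3 ≤ (j:ℕ) → x j = c
              · have key : ∀ v : ZMod 3, s n (shiftTuple Mc x v) = s 0 ![v, c] := by
                  intro v
                  by_cases hvc : v = c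
                  · rw [hvc, hs2id]
                    exact hconst _ _ c (hall' n x c (fun u => u = c) rfl hM hR)
                  · apply ihP _ v c hvc
                    · exact hall' n x v (fun u => u = v ∨ u = c) (Or.inl rfl)
                        (Or.inr hM) (fun j hj => Or.inr (hR j hj))
                    · exact ⟨0, ht0 n x v⟩
                    · exact ⟨1, (ht1 n x v).trans hM⟩
                rw [key (x 0), key (x 1), key (x 2)]
                rcases perm6 _ _ _ h01 h12 h02 with
                  ⟨e0,e1,e2⟩|⟨e0,e1,e2⟩|⟨e0,e1,e2⟩|⟨e0,e1,e2⟩|⟨e0,e1,e2⟩|⟨e0,e1,e2⟩ <;>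
                  rw [e0, e1, e2]
                · exact msw2 _ _ _
                · exact msw1 _ _ _
                · exact (mrot _ _ _).symm
                · exact mrot _ _ _
                · exact (msw2 _ _ _).trans (mrot _ _ _)
              · push_neg at hR
                obtain ⟨j, hj3, hjc⟩ := hR
                by_cases hR2 : ∃ j' : Fin (n+3), 3 ≤ (j':ℕ) ∧ x j' ≠ c ∧ x j' ≠ x j
                · obtain ⟨j', hj'3, hj'c, hj'd⟩ := hR2
                  have tfull : ∀ v w, ∃ i, shiftTuple Mc x v i = w := by
                    intro v w
                    rcases cover3 c (x j) (x j') w (Ne.symm hjc) (Ne.symm hj'd)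
                        (Ne.symm hj'c) with rfl|rfl|rfl
                    · exact ⟨1, (ht1 _ _ _).trans hM⟩
                    · exact ⟨_, htrest _ _ _ j hj3⟩
                    · exact ⟨_, htrest _ _ _ j' hj'3⟩
                  rw [ihQ _ (tfull (x 0)), ihQ _ (tfull (x 1)), ihQ _ (tfull (x 2))]
                  exact hmmin _ _
                · push_neg at hR2
                  have hrestcd : ∀ j' : Fin (n+3), 3 ≤ (j':ℕ) → x j' = c ∨ x j' = x j := by
                    intro j' h3
                    by_cases h : x j' = c
                    · exact Or.inl h
                    · exact Or.inr (hR2 j' h3 h)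
                  have tcd : ∀ v, (v = c ∨ v = x j) →
                      s n (shiftTuple Mc x v) = s 0 ![x j, c] := by
                    intro v hv
                    apply ihP _ (x j) c hjc
                    · refine hall' n x v (fun u => u = x j ∨ u = c) ?_ (Or.inr hM)
                        (fun j' h3 => (hrestcd j' h3).symm)
                      rcases hv with h|h; exacts [Or.inr h, Or.inl h]
                    · exact ⟨_, htrest n x v j hj3⟩
                    · exact ⟨1, (ht1 n x v).trans hM⟩
                  have todd : ∀ v, v ≠ c → v ≠ x j →
                      s n (shiftTuple Mc x v) =
                        m (s 0 ![0, c]) (s 0 ![1, c]) (s 0 ![2, c]) := by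
                    intro v hvc hvd
                    apply ihQ
                    intro w
                    rcases cover3 c (x j) v w (Ne.symm hjc) (Ne.symm hvd)
                        (Ne.symm hvc) with rfl|rfl|rfl
                    · exact ⟨1, (ht1 _ _ _).trans hM⟩
                    · exact ⟨_, htrest _ _ _ j hj3⟩
                    · exact ⟨0, ht0 _ _ _⟩
                  rcases oddone (x 0) (x 1) (x 2) c (x j) h01 h12 h02 hjc with
                    ⟨ha1,ha2,hb,hcc⟩|⟨ha1,ha2,hb,hcc⟩|⟨ha1,ha2,hb,hcc⟩
                  · rw [todd _ ha1 ha2, tcd _ hb, tcd _ hcc]; exact m3 _ _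
                  · rw [tcd _ hb, todd _ ha1 ha2, tcd _ hcc]; exact m2 _ _
                  · rw [tcd _ hb, tcd _ hcc, todd _ ha1 ha2]; exact hmmin _ _
  refine ⟨fun k => (main k).1, fun k => (main k).2, ?_⟩
  intro k x y hxy
  have classify : ∀ (z : Fin (k+2) → ZMod 3) (b0 b1 b2 : Bool),
      ((∃ i, z i = 0) ↔ b0 = true) → ((∃ i, z i = 1) ↔ b1 = true) →
      ((∃ i, z i = 2) ↔ b2 = true) →
      s k z = (match b0, b1, b2 with
        | true, true, true => m (s 0 ![0, c]) (s 0 ![1, c]) (s 0 ![2, c])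
        | true, true, false => s 0 ![0, 1]
        | true, false, true => s 0 ![0, 2]
        | false, true, true => s 0 ![1, 2]
        | true, false, false => (0 : ZMod 3)
        | false, true, false => 1
        | false, false, true => 2
        | false, false, false => 0) := by
    intro z b0 b1 b2 h0 h1 h2
    cases b0 <;> cases b1 <;> cases b2 <;>
      simp only [iff_true, iff_false, Bool.false_eq_true] at h0 h1 h2
    · exfalso
      rcases zcover (z 0) with h|h|h
      exacts [h0 ⟨0, h⟩, h1 ⟨0, h⟩, h2 ⟨0, h⟩]
    · apply hconst
      intro i
      rcases zcover (z i) with h|h|h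
      exacts [absurd ⟨i, h⟩ h0, absurd ⟨i, h⟩ h1, h]
    · apply hconst
      intro i
      rcases zcover (z i) with h|h|h
      exacts [absurd ⟨i, h⟩ h0, h, absurd ⟨i, h⟩ h2]
    · apply (main k).1 z 1 2 (by decide) _ h1 h2
      intro i
      rcases zcover (z i) with h|h|h
      exacts [absurd ⟨i, h⟩ h0, Or.inl h, Or.inr h]
    · apply hconst
      intro i
      rcases zcover (z i) with h|h|h
      exacts [h, absurd ⟨i, h⟩ h1, absurd ⟨i, h⟩ h2]
    · apply (main k).1 z 0 2 (by decide) _ h0 h2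
      intro i
      rcases zcover (z i) with h|h|h
      exacts [Or.inl h, absurd ⟨i, h⟩ h1, Or.inr h]
    · apply (main k).1 z 0 1 (by decide) _ h0 h1
      intro i
      rcases zcover (z i) with h|h|h
      exacts [Or.inl h, Or.inr h, absurd ⟨i, h⟩ h2]
    · apply (main k).2 z
      intro v
      rcases zcover v with rfl|rfl|rfl
      exacts [h0, h1, h2]
  rw [classify x (decide (∃ i, x i = 0)) (decide (∃ i, x i = 1)) (decide (∃ i, x i = 2))
        (by simp) (by simp) (by simp),
      classify y (decide (∃ i, x i = 0)) (decide (∃ i, x i = 1)) (decide (∃ i, x i = 2))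
        (by rw [decide_eq_true_eq]; exact (hxy 0).symm)
        (by rw [decide_eq_true_eq]; exact (hxy 1).symm)
        (by rw [decide_eq_true_eq]; exact (hxy 2).symm)]
end

section
/- Identifying three variables of a generalized minority of odd arity n ≥ 5 yields a generalized minority of arity n−2. Precisely, if f : A^n → A is invariant under all argument permutations and satisfies f(x,x,x_3,...,x_n) = f(y,y,x_3,...,x_n), then g(x_1,...,x_{n-2}) := f(x_1,x_1,x_1,x_2,...,x_{n-2}) is invariant under all argument permutations and satisfies g(x,x,x_3,...,x_{n-2}) = g(y,y,x_3,...,x_{n-2}). -/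
def embAux (n : ℕ) (hn : 3 ≤ n) : Fin (n+2) → Fin n :=
  fun i => ⟨(i : ℕ) - 2, by
    have := i.isLt; rcases Nat.lt_or_ge (i:ℕ) 2 with h | h
    · rw [Nat.sub_eq_zero_of_le h.le]; linarith
    · exact Nat.sub_lt_left_of_lt_add h (by linarith)⟩

theorem updU_self {A : Type*} (n : ℕ) (v : Fin (n+2) → A) (a : A)
    (h0 : v 0 = a) (h1 : v 1 = a) :
    Function.update (Function.update v 0 a) 1 a = v := by
  funext j
  rcases eq_or_ne j 1 with rfl | hj1
  · simp [h1]
  rcases eq_or_ne j 0 with rfl | hj0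
  · simp [Function.update_of_ne hj1, h0]
  · simp [Function.update_of_ne hj1, Function.update_of_ne hj0]

/-- the swap lemma, case where p sits at index 0 -/
theorem swap_zero_aux {A : Type*} (n : ℕ) (hn : 3 ≤ n)
    (f : (Fin (n + 2) → A) → A)
    (hperm : ∀ (σ : Equiv.Perm (Fin (n + 2))) (x : Fin (n + 2) → A), f (x ∘ σ) = f x)
    (hgm : ∀ (x : Fin (n + 2) → A) (a b : A),
      f (Function.update (Function.update x 0 a) 1 a) =
        f (Function.update (Function.update x 0 b) 1 b))
    (x : Fin n → A) (p q : Fin n) (hp : (p : ℕ) = 0) (hq : (q : ℕ) ≠ 0) :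
    f ((x ∘ Equiv.swap p q) ∘ embAux n hn) = f (x ∘ embAux n hn) := by
  set z : Fin (n+2) → A := x ∘ embAux n hn with hz
  have hq2 : (q : ℕ) + 2 < n + 2 := by have := q.isLt; omega
  set Q : Fin (n+2) := ⟨(q : ℕ) + 2, hq2⟩ with hQ
  set T : Fin (n+2) := ⟨2, by omega⟩ with hT
  -- emb of small indices is p
  have embp : ∀ j : Fin (n+2), (j : ℕ) ≤ 2 → embAux n hn j = p := by
    intro j hj
    apply Fin.ext
    show (j : ℕ) - 2 = (p : ℕ)
    omega
  have embQ : embAux n hn Q = q := by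
    apply Fin.ext; show (Q : ℕ) - 2 = (q : ℕ); simp [hQ]
  have hz0 : z 0 = x p := by
    show x (embAux n hn 0) = x p
    rw [embp 0 (by simp)]
  have hz1 : z 1 = x p := by
    show x (embAux n hn 1) = x p
    rw [embp 1 (by simp)]
  set w : Fin (n+2) → A := Function.update (Function.update z 0 (x q)) 1 (x q) with hw
  have step1 : f z = f w := by
    conv_lhs => rw [← updU_self n z (x p) hz0 hz1]
    exact hgm z (x p) (x q)
  have hTQ : T ≠ Q := by
    intro h
    have := congrArg Fin.val h
    simp [hT, hQ] at this
    omega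
  have step2 : w ∘ Equiv.swap T Q = (x ∘ Equiv.swap p q) ∘ embAux n hn := by
    funext i
    show w (Equiv.swap T Q i) = x (Equiv.swap p q (embAux n hn i))
    have hpq : p ≠ q := by intro h; rw [h] at hp; exact hq hp
    rcases eq_or_ne i T with rfl | hiT
    · rw [Equiv.swap_apply_left, embp T (by simp [hT]), Equiv.swap_apply_left]
      have hQ1 : Q ≠ 1 := by
        intro h; have := congrArg Fin.val h; simp [hQ] at this
      have hQ0 : Q ≠ 0 := by
        intro h; have := congrArg Fin.val h; simp [hQ] at this
      rw [hw, Function.update_of_ne hQ1, Function.update_of_ne hQ0]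
      show x (embAux n hn Q) = x q
      rw [embQ]
    rcases eq_or_ne i Q with rfl | hiQ
    · rw [Equiv.swap_apply_right, embQ, Equiv.swap_apply_right]
      have hT1 : T ≠ 1 := by
        intro h; have := congrArg Fin.val h; simp [hT] at this
      have hT0 : T ≠ 0 := by
        intro h; have := congrArg Fin.val h; simp [hT] at this
      rw [hw, Function.update_of_ne hT1, Function.update_of_ne hT0]
      show x (embAux n hn T) = x p
      rw [embp T (by simp [hT])]
    rw [Equiv.swap_apply_of_ne_of_ne hiT hiQ]
    rcases eq_or_ne i 1 with rfl | hi1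
    · rw [hw, Function.update_self, embp 1 (by simp), Equiv.swap_apply_left]
    rcases eq_or_ne i 0 with rfl | hi0
    · rw [hw, Function.update_of_ne hi1, Function.update_self,
        embp 0 (by simp), Equiv.swap_apply_left]
    · -- i.val ≥ 3, i ≠ Q
      have hival : 3 ≤ (i : ℕ) := by
        rcases Nat.lt_or_ge (i : ℕ) 3 with h | h
        · exfalso
          interval_cases h' : (i : ℕ)
          · exact hi0 (Fin.ext (by simpa using h'))
          · exact hi1 (Fin.ext (by simpa using h'))
          · exact hiT (Fin.ext (by simp [hT, h']))
        · exact h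
      have h1 : embAux n hn i ≠ p := by
        intro h; have := congrArg Fin.val h
        rw [embAux] at this; simp at this; omega
      have h2 : embAux n hn i ≠ q := by
        intro h; have := congrArg Fin.val h
        rw [embAux] at this; simp at this
        exact hiQ (Fin.ext (by simp [hQ]; omega))
      rw [Equiv.swap_apply_of_ne_of_ne h1 h2, hw,
        Function.update_of_ne hi1, Function.update_of_ne hi0]
      rfl
  calc f ((x ∘ Equiv.swap p q) ∘ embAux n hn) = f (w ∘ Equiv.swap T Q) := by rw [step2]
    _ = f w := hperm _ _
    _ = f z := step1.symm

theorem swap_aux {A : Type*} (n : ℕ) (hn : 3 ≤ n)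
    (f : (Fin (n + 2) → A) → A)
    (hperm : ∀ (σ : Equiv.Perm (Fin (n + 2))) (x : Fin (n + 2) → A), f (x ∘ σ) = f x)
    (hgm : ∀ (x : Fin (n + 2) → A) (a b : A),
      f (Function.update (Function.update x 0 a) 1 a) =
        f (Function.update (Function.update x 0 b) 1 b))
    (x : Fin n → A) (p q : Fin n) :
    f ((x ∘ Equiv.swap p q) ∘ embAux n hn) = f (x ∘ embAux n hn) := by
  rcases eq_or_ne p q with rfl | hpq
  · rw [Equiv.swap_self]
    rfl
  rcases eq_or_ne ((p : ℕ)) 0 with hp | hp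
  · have hq : (q : ℕ) ≠ 0 := by
      intro h; exact hpq (Fin.ext (hp.trans h.symm))
    exact swap_zero_aux n hn f hperm hgm x p q hp hq
  rcases eq_or_ne ((q : ℕ)) 0 with hq | hq
  · rw [Equiv.swap_comm]
    exact swap_zero_aux n hn f hperm hgm x q p hq hp
  -- both nonzero: lift the swap
  have hp2 : (p : ℕ) + 2 < n + 2 := by have := p.isLt; omega
  have hq2 : (q : ℕ) + 2 < n + 2 := by have := q.isLt; omega
  set P : Fin (n+2) := ⟨(p : ℕ) + 2, hp2⟩ with hP
  set Q : Fin (n+2) := ⟨(q : ℕ) + 2, hq2⟩ with hQ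
  have embP : embAux n hn P = p := by apply Fin.ext; show (P : ℕ) - 2 = _; simp [hP]
  have embQ : embAux n hn Q = q := by apply Fin.ext; show (Q : ℕ) - 2 = _; simp [hQ]
  have key : (x ∘ embAux n hn) ∘ Equiv.swap P Q = (x ∘ Equiv.swap p q) ∘ embAux n hn := by
    funext i
    show x (embAux n hn (Equiv.swap P Q i)) = x (Equiv.swap p q (embAux n hn i))
    congr 1
    rcases eq_or_ne i P with rfl | hiP
    · rw [Equiv.swap_apply_left, embQ, embP, Equiv.swap_apply_left]
    rcases eq_or_ne i Q with rfl | hiQ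
    · rw [Equiv.swap_apply_right, embP, embQ, Equiv.swap_apply_right]
    rw [Equiv.swap_apply_of_ne_of_ne hiP hiQ]
    have h1 : embAux n hn i ≠ p := by
      intro h; have := congrArg Fin.val h
      rw [embAux] at this; simp at this
      exact hiP (Fin.ext (by simp [hP]; omega))
    have h2 : embAux n hn i ≠ q := by
      intro h; have := congrArg Fin.val h
      rw [embAux] at this; simp at this
      exact hiQ (Fin.ext (by simp [hQ]; omega))
    rw [Equiv.swap_apply_of_ne_of_ne h1 h2]
  rw [← key, hperm]

theorem perm_aux {A : Type*} (n : ℕ) (hn : 3 ≤ n)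
    (f : (Fin (n + 2) → A) → A)
    (hperm : ∀ (σ : Equiv.Perm (Fin (n + 2))) (x : Fin (n + 2) → A), f (x ∘ σ) = f x)
    (hgm : ∀ (x : Fin (n + 2) → A) (a b : A),
      f (Function.update (Function.update x 0 a) 1 a) =
        f (Function.update (Function.update x 0 b) 1 b))
    (σ : Equiv.Perm (Fin n)) :
    ∀ x : Fin n → A, f ((x ∘ σ) ∘ embAux n hn) = f (x ∘ embAux n hn) := by
  refine Equiv.Perm.swap_induction_on σ ?_ ?_
  · intro x
    rfl
  · intro τ a b hab ih x
    have hcomp : (x ∘ ⇑(Equiv.swap a b * τ)) = ((x ∘ Equiv.swap a b) ∘ τ) := rfl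
    rw [hcomp, ih (x ∘ Equiv.swap a b), swap_aux n hn f hperm hgm x a b]

set_option maxHeartbeats 2000000 in
theorem gm_aux {A : Type*} (n : ℕ) (hn : 3 ≤ n)
    (f : (Fin (n + 2) → A) → A)
    (hperm : ∀ (σ : Equiv.Perm (Fin (n + 2))) (x : Fin (n + 2) → A), f (x ∘ σ) = f x)
    (hgm : ∀ (x : Fin (n + 2) → A) (a b : A),
      f (Function.update (Function.update x 0 a) 1 a) =
        f (Function.update (Function.update x 0 b) 1 b))
    (x : Fin n → A) (a b : A) :
    f ((Function.update (Function.update x ⟨0, Nat.lt_of_lt_of_le (by norm_num) hn⟩ a) ⟨1, Nat.lt_of_lt_of_le (by norm_num) hn⟩ a) ∘ embAux n hn) =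
      f ((Function.update (Function.update x ⟨0, Nat.lt_of_lt_of_le (by norm_num) hn⟩ b) ⟨1, Nat.lt_of_lt_of_le (by norm_num) hn⟩ b) ∘ embAux n hn) := by
  set Z0 : Fin n := ⟨0, by omega⟩ with hZ0
  set Z1 : Fin n := ⟨1, by omega⟩ with hZ1
  set T2 : Fin (n+2) := ⟨2, by omega⟩ with hT2
  set I3 : Fin (n+2) := ⟨3, by omega⟩ with hI3
  have nef : ∀ (u v : Fin (n+2)), (u : ℕ) ≠ (v : ℕ) → u ≠ v :=
    fun u v h huv => h (congrArg Fin.val huv)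
  have hZ10 : Z1 ≠ Z0 := by
    intro h; have := congrArg Fin.val h; simp [hZ0, hZ1] at this
  have embsmall : ∀ j : Fin (n+2), (j : ℕ) ≤ 2 → embAux n hn j = Z0 := by
    intro j hj; apply Fin.ext; show (j : ℕ) - 2 = (Z0 : ℕ); simp [hZ0]; omega
  have embI3 : embAux n hn I3 = Z1 := by
    apply Fin.ext; show (I3 : ℕ) - 2 = (Z1 : ℕ); simp [hI3, hZ1]
  -- values of y_c
  have yval : ∀ (c : A) (j : Fin (n+2)), (j : ℕ) ≤ 2 →
      ((Function.update (Function.update x Z0 c) Z1 c) ∘ embAux n hn) j = c := by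
    intro c j hj
    show (Function.update (Function.update x Z0 c) Z1 c) (embAux n hn j) = c
    rw [embsmall j hj, Function.update_of_ne hZ10.symm, Function.update_self]
  have yI3 : ∀ (c : A),
      ((Function.update (Function.update x Z0 c) Z1 c) ∘ embAux n hn) I3 = c := by
    intro c
    show (Function.update (Function.update x Z0 c) Z1 c) (embAux n hn I3) = c
    rw [embI3, Function.update_self]
  have ytail : ∀ (c : A) (j : Fin (n+2)), 4 ≤ (j : ℕ) →
      ((Function.update (Function.update x Z0 c) Z1 c) ∘ embAux n hn) j = x (embAux n hn j) := by
    intro c j hj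
    show (Function.update (Function.update x Z0 c) Z1 c) (embAux n hn j) = _
    have h1 : embAux n hn j ≠ Z1 := by
      intro h; have := congrArg Fin.val h; rw [embAux] at this
      simp [hZ1] at this; omega
    have h0 : embAux n hn j ≠ Z0 := by
      intro h; have := congrArg Fin.val h; rw [embAux] at this
      simp [hZ0] at this; omega
    rw [Function.update_of_ne h1, Function.update_of_ne h0]
  set ya : Fin (n+2) → A := (Function.update (Function.update x Z0 a) Z1 a) ∘ embAux n hn with hya
  set yb : Fin (n+2) → A := (Function.update (Function.update x Z0 b) Z1 b) ∘ embAux n hn with hyb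
  set w : Fin (n+2) → A := Function.update (Function.update ya 0 b) 1 b with hw
  have step1 : f ya = f w := by
    conv_lhs => rw [← updU_self n ya a (yval a 0 (by simp)) (yval a 1 (by simp))]
    exact hgm ya a b
  set σ2 : Equiv.Perm (Fin (n+2)) := (Equiv.swap 1 I3).trans (Equiv.swap 0 T2) with hσ2
  have step2 : f w = f (w ∘ σ2) := (hperm σ2 w).symm
  -- basic disequalities
  have h01 : (0 : Fin (n+2)) ≠ 1 := nef _ _ (by simp)
  have h0I3 : (0 : Fin (n+2)) ≠ I3 := nef _ _ (by simp [hI3])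
  have h0T2 : (0 : Fin (n+2)) ≠ T2 := nef _ _ (by simp [hT2])
  have h1T2 : (1 : Fin (n+2)) ≠ T2 := nef _ _ (by simp [hT2])
  have h1I3 : (1 : Fin (n+2)) ≠ I3 := nef _ _ (by simp [hI3])
  have hT2I3 : T2 ≠ I3 := nef _ _ (by simp [hT2, hI3])
  have hwT2 : w T2 = a := by
    rw [hw, Function.update_of_ne h1T2.symm, Function.update_of_ne h0T2.symm]
    exact yval a T2 (by simp [hT2])
  have hwI3 : w I3 = a := by
    rw [hw, Function.update_of_ne h1I3.symm, Function.update_of_ne h0I3.symm]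
    exact yI3 a
  have ha0 : (w ∘ σ2) 0 = a := by
    show w (Equiv.swap 0 T2 (Equiv.swap 1 I3 0)) = a
    rw [Equiv.swap_apply_of_ne_of_ne h01 h0I3, Equiv.swap_apply_left, hwT2]
  have ha1 : (w ∘ σ2) 1 = a := by
    show w (Equiv.swap 0 T2 (Equiv.swap 1 I3 1)) = a
    rw [Equiv.swap_apply_left, Equiv.swap_apply_of_ne_of_ne h0I3.symm hT2I3.symm, hwI3]
  have step3 : f (w ∘ σ2) = f (Function.update (Function.update (w ∘ σ2) 0 b) 1 b) := by
    conv_lhs => rw [← updU_self n (w ∘ σ2) a ha0 ha1]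
    exact hgm (w ∘ σ2) a b
  have step4 : Function.update (Function.update (w ∘ σ2) 0 b) 1 b = yb := by
    funext j
    rcases eq_or_ne j 1 with rfl | hj1
    · rw [Function.update_self]
      exact (yval b 1 (by simp)).symm
    rcases eq_or_ne j 0 with rfl | hj0
    · rw [Function.update_of_ne hj1, Function.update_self]
      exact (yval b 0 (by simp)).symm
    rw [Function.update_of_ne hj1, Function.update_of_ne hj0]
    rcases eq_or_ne j T2 with rfl | hjT2
    · show w (Equiv.swap 0 T2 (Equiv.swap 1 I3 T2)) = yb T2
      rw [Equiv.swap_apply_of_ne_of_ne h1T2.symm hT2I3, Equiv.swap_apply_right, hw,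
        Function.update_of_ne h01, Function.update_self]
      exact (yval b T2 (by simp [hT2])).symm
    rcases eq_or_ne j I3 with rfl | hjI3
    · show w (Equiv.swap 0 T2 (Equiv.swap 1 I3 I3)) = yb I3
      rw [Equiv.swap_apply_right, Equiv.swap_apply_of_ne_of_ne h01.symm h1T2,
        hw, Function.update_self]
      exact (yI3 b).symm
    · have hj4 : 4 ≤ (j : ℕ) := by
        rcases Nat.lt_or_ge (j : ℕ) 4 with h | h
        · exfalso
          interval_cases h' : (j : ℕ)
          · exact hj0 (Fin.ext (by simpa using h'))
          · exact hj1 (Fin.ext (by simpa using h'))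
          · exact hjT2 (Fin.ext (by simp [hT2, h']))
          · exact hjI3 (Fin.ext (by simp [hI3, h']))
        · exact h
      show w (Equiv.swap 0 T2 (Equiv.swap 1 I3 j)) = yb j
      rw [Equiv.swap_apply_of_ne_of_ne hj1 hjI3,
        Equiv.swap_apply_of_ne_of_ne hj0 hjT2, hw,
        Function.update_of_ne hj1, Function.update_of_ne hj0]
      exact (ytail a j hj4).trans (ytail b j hj4).symm
  rw [show f ya = f yb from by rw [step1, step2, step3, step4]]



/-- Identifying three variables of a generalized minority of odd arity `n+2 ≥ 5`
yields a generalized minority of arity `n`. -/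
theorem identify_generalized_minority (A : Type*) (n : ℕ) (hn : 3 ≤ n)
    (hodd : Odd (n + 2))
    (f : (Fin (n + 2) → A) → A)
    (hperm : ∀ (σ : Equiv.Perm (Fin (n + 2))) (x : Fin (n + 2) → A), f (x ∘ σ) = f x)
    (hgm : ∀ (x : Fin (n + 2) → A) (a b : A),
      f (Function.update (Function.update x 0 a) 1 a) =
        f (Function.update (Function.update x 0 b) 1 b)) :
    (∀ (σ : Equiv.Perm (Fin n)) (x : Fin n → A),
      f (fun i => (x ∘ σ) ⟨(i : ℕ) - 2, by have := i.isLt; omega⟩) =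
        f (fun i => x ⟨(i : ℕ) - 2, by have := i.isLt; omega⟩)) ∧
    (∀ (x : Fin n → A) (a b : A),
      f (fun i => (Function.update (Function.update x ⟨0, by omega⟩ a) ⟨1, by omega⟩ a)
          ⟨(i : ℕ) - 2, by have := i.isLt; omega⟩) =
        f (fun i => (Function.update (Function.update x ⟨0, by omega⟩ b) ⟨1, by omega⟩ b)
          ⟨(i : ℕ) - 2, by have := i.isLt; omega⟩)) := by
  constructor
  · intro σ x
    show f ((x ∘ σ) ∘ embAux n hn) = f (x ∘ embAux n hn)
    exact perm_aux n hn f hperm hgm σ x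
  · intro x a b
    show f ((Function.update (Function.update x ⟨0, by omega⟩ a) ⟨1, by omega⟩ a) ∘ embAux n hn) =
      f ((Function.update (Function.update x ⟨0, by omega⟩ b) ⟨1, by omega⟩ b) ∘ embAux n hn)
    exact gm_aux n hn f hperm hgm x a b
end
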